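/- For any rational number r/s (in lowest terms) that is not an integer multiple of 1/2, any point z₀ in the upper half-plane ℍ, and any matrix B₀ ∈ SL(2,ℝ), the average (1/s) ∑_{k=0}^{s-1} φ(B₀ · R_{rk/s} · z₀) equals φ(z₀) · φ(B₀ · i), where φ(z) = (1+|z|²)/(2 Im z) and R_θ is rotation by angle 2πθ acting by Möbius transformation. -/

import Mathlib

noncomputable def phi (z : ℂ) : ℝ := (1 + ‖z‖ ^ 2) / (2 * z.im)

noncomputable def moeb (A : Matrix (Fin 2) (Fin 2) ℝ) (z : ℂ) : ℂ :=
  ((A 0 0 : ℂ) * z + (A 0 1 : ℂ)) / ((A 1 0 : ℂ) * z + (A 1 1 : ℂ))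

lemma den_ne (A : Matrix (Fin 2) (Fin 2) ℝ) (hA : A.det = 1) (z : ℂ) (hz : 0 < z.im) :
    ((A 1 0 : ℂ) * z + (A 1 1 : ℂ)) ≠ 0 := by
  rw [Matrix.det_fin_two] at hA
  intro h
  have him := congrArg Complex.im h
  have hre := congrArg Complex.re h
  simp [Complex.add_im, Complex.add_re, Complex.mul_im, Complex.mul_re] at him hre
  rcases him with h10 | h0
  · rw [h10] at hre
    simp at hre
    rw [h10, hre] at hA; simp at hA
  · linarith

lemma im_moeb (A : Matrix (Fin 2) (Fin 2) ℝ) (hA : A.det = 1) (z : ℂ) (hz : 0 < z.im) :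
    (moeb A z).im = z.im / Complex.normSq ((A 1 0 : ℂ) * z + (A 1 1 : ℂ)) := by
  rw [Matrix.det_fin_two] at hA
  rw [moeb, Complex.div_im, div_sub_div_same]
  congr 1
  simp only [Complex.add_re, Complex.add_im, Complex.ofReal_re, Complex.ofReal_im,
    Complex.mul_re, Complex.mul_im]
  linear_combination z.im * hA

lemma im_moeb_pos (A : Matrix (Fin 2) (Fin 2) ℝ) (hA : A.det = 1) (z : ℂ) (hz : 0 < z.im) :
    0 < (moeb A z).im := by
  rw [im_moeb A hA z hz]
  have hne := den_ne A hA z hz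
  exact div_pos hz (Complex.normSq_pos.mpr hne)

lemma phi_moeb (A : Matrix (Fin 2) (Fin 2) ℝ) (hA : A.det = 1) (z : ℂ) (hz : 0 < z.im) :
    phi (moeb A z) = (Complex.normSq ((A 0 0 : ℂ) * z + (A 0 1 : ℂ))
      + Complex.normSq ((A 1 0 : ℂ) * z + (A 1 1 : ℂ))) / (2 * z.im) := by
  have hne := den_ne A hA z hz
  have hns : Complex.normSq ((A 1 0 : ℂ) * z + (A 1 1 : ℂ)) ≠ 0 :=
    fun h => hne (Complex.normSq_eq_zero.mp h)
  rw [phi, im_moeb A hA z hz]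
  rw [moeb, Complex.sq_norm, Complex.normSq_div]
  have hy : z.im ≠ 0 := ne_of_gt hz
  field_simp
  rw [mul_add, mul_div_assoc', mul_comm z (A 1 0 : ℂ), mul_div_cancel_left₀ _ hns]
  ring

lemma moeb_comp (A B : Matrix (Fin 2) (Fin 2) ℝ) (hA : A.det = 1) (hB : B.det = 1)
    (z : ℂ) (hz : 0 < z.im) : moeb A (moeb B z) = moeb (A * B) z := by
  have hdB := den_ne B hB z hz
  have hAB : (A * B).det = 1 := by rw [Matrix.det_mul, hA, hB, one_mul]
  have hdAB := den_ne (A * B) hAB z hz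
  have hw : 0 < (moeb B z).im := im_moeb_pos B hB z hz
  have hdA := den_ne A hA (moeb B z) hw
  have key : ((A 1 0 : ℂ)) * ((B 0 0 : ℂ) * z + B 0 1) + (A 1 1 : ℂ) * ((B 1 0 : ℂ) * z + B 1 1)
      = ((A * B) 1 0 : ℂ) * z + ((A * B) 1 1 : ℂ) := by
    simp [Matrix.mul_apply, Fin.sum_univ_two]
    push_cast
    ring
  rw [moeb, moeb, moeb] at *
  simp only [Matrix.mul_apply, Fin.sum_univ_two] at hdAB ⊢
  push_cast at hdAB ⊢
  have hdB' : z * (B 1 0 : ℂ) + B 1 1 ≠ 0 := by rwa [mul_comm z]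
  field_simp at hdA ⊢
  rw [div_eq_div_iff (div_ne_zero_iff.mp hdA).1 (by intro h; apply hdAB; linear_combination h)]
  ring

lemma sum_exp_zero (r : ℤ) (s : ℕ) (hs : 0 < s) (hhalf : ¬ ((s : ℤ) ∣ 2 * r)) :
    ∑ k ∈ Finset.range s, Complex.exp ((k : ℂ) * (4 * Real.pi * r / s) * Complex.I) = 0 := by
  have hx : Complex.exp ((4 * Real.pi * r / s : ℝ) * Complex.I) ≠ 1 := by
    intro heq
    rw [Complex.exp_eq_one_iff] at heq
    obtain ⟨n, hn⟩ := heq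
    apply hhalf
    have hn' : ((4 * Real.pi * r / s : ℝ) : ℂ) * Complex.I
        = ((n : ℂ) * (2 * (Real.pi : ℂ))) * Complex.I := by rw [hn]; ring
    have h2 : ((4 * Real.pi * r / s : ℝ) : ℂ) = (n : ℂ) * (2 * (Real.pi : ℂ)) :=
      mul_right_cancel₀ Complex.I_ne_zero hn'
    have h3 : (4 * Real.pi * r / s : ℝ) = (n : ℝ) * (2 * Real.pi) := by exact_mod_cast h2
    have hs' : (s : ℝ) ≠ 0 := Nat.cast_ne_zero.mpr hs.ne'
    have hpi : Real.pi ≠ 0 := Real.pi_ne_zero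
    have h4 : (2 * r : ℝ) = n * s := by
      field_simp at h3
      nlinarith [h3, Real.pi_pos]
    have h5 : (2 * r : ℤ) = n * s := by exact_mod_cast h4
    exact ⟨n, by linarith⟩
  have hgeom := geom_sum_eq hx s
  have hpow : Complex.exp ((4 * Real.pi * r / s : ℝ) * Complex.I) ^ s = 1 := by
    rw [← Complex.exp_nat_mul]
    have : (s : ℂ) * (((4 * Real.pi * r / s : ℝ) : ℂ) * Complex.I) = (2 * r) * (2 * Real.pi * Complex.I) := by
      have hs' : (s : ℂ) ≠ 0 := Nat.cast_ne_zero.mpr hs.ne'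
      push_cast
      field_simp
      ring
    rw [this]
    exact_mod_cast Complex.exp_int_mul_two_pi_mul_I (2 * r)
  calc ∑ k ∈ Finset.range s, Complex.exp ((k : ℂ) * (4 * Real.pi * r / s) * Complex.I)
      = ∑ k ∈ Finset.range s, Complex.exp ((4 * Real.pi * r / s : ℝ) * Complex.I) ^ k := by
        refine Finset.sum_congr rfl fun k _ => ?_
        rw [← Complex.exp_nat_mul]
        push_cast
        ring_nf
    _ = 0 := by rw [hgeom, hpow]; simp

lemma keyid (a b c d x y C S : ℝ) (h : S^2 + C^2 = 1) :
    2*(((a*C+b*S)*x+(b*C-a*S))^2 + ((a*C+b*S)*y)^2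
      + ((c*C+d*S)*x+(d*C-c*S))^2 + ((c*C+d*S)*y)^2)
    = (a^2+b^2+c^2+d^2)*(x^2+y^2+1)
      + ((a^2+c^2-b^2-d^2)*(x^2+y^2-1)+4*(a*b+c*d)*x)*(C^2-S^2)
      + (2*(a*b+c*d)*(x^2+y^2-1)-2*(a^2+c^2-b^2-d^2)*x)*(2*S*C) := by
  linear_combination ((a^2+b^2+c^2+d^2)*(x^2+y^2+1)) * h

lemma keyid2 (a b c d x y C S : ℝ) (h : S^2 + C^2 = 1) (hy : y ≠ 0) :
    (((a*C+b*S)*x+(b*C-a*S))^2 + ((a*C+b*S)*y)^2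
      + ((c*C+d*S)*x+(d*C-c*S))^2 + ((c*C+d*S)*y)^2)/(2*y)
    = (1+(x^2+y^2))/(2*y) * ((a^2+b^2+c^2+d^2)/2)
      + ((a^2+c^2-b^2-d^2)*(x^2+y^2-1)+4*(a*b+c*d)*x)/(4*y) * (C^2-S^2)
      + (2*(a*b+c*d)*(x^2+y^2-1)-2*(a^2+c^2-b^2-d^2)*x)/(4*y) * (2*S*C) := by
  have key := keyid a b c d x y C S h
  field_simp
  linear_combination 4 * key

noncomputable def Rot (θ : ℝ) : Matrix (Fin 2) (Fin 2) ℝ :=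
  !![Real.cos (2 * Real.pi * θ), -Real.sin (2 * Real.pi * θ);
     Real.sin (2 * Real.pi * θ),  Real.cos (2 * Real.pi * θ)]

lemma rot_det (θ : ℝ) : (Rot θ).det = 1 := by
  simp [Rot, Matrix.det_fin_two_of]
  linear_combination Real.sin_sq_add_cos_sq (2 * Real.pi * θ)

/-- Exact cancellation identity for elliptic averages (Lemma `cancellation`). -/
theorem stmt0 (r : ℤ) (s : ℕ) (hs : 0 < s) (hcop : Int.gcd r (s : ℤ) = 1)
    (hhalf : ¬ ((s : ℤ) ∣ 2 * r)) (z₀ : ℂ) (hz₀ : 0 < z₀.im)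
    (B₀ : Matrix (Fin 2) (Fin 2) ℝ) (hB₀ : B₀.det = 1) :
    (1 / (s : ℝ)) * ∑ k ∈ Finset.range s,
        phi (moeb B₀ (moeb (Rot ((r : ℝ) * (k : ℝ) / (s : ℝ))) z₀))
      = phi z₀ * phi (moeb B₀ Complex.I) := by
  have hy : z₀.im ≠ 0 := ne_of_gt hz₀
  have hsR : (s : ℝ) ≠ 0 := Nat.cast_ne_zero.mpr hs.ne'
  set β : ℝ := 4 * Real.pi * r / s with hβ
  -- trig sums
  have hsum := sum_exp_zero r s hs hhalf
  have hcos : ∑ k ∈ Finset.range s, Real.cos ((k : ℝ) * β) = 0 := by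
    have h1 : ∑ k ∈ Finset.range s, Real.cos ((k : ℝ) * β)
        = ∑ k ∈ Finset.range s, (Complex.exp ((k : ℂ) * (4 * Real.pi * r / s) * Complex.I)).re := by
      refine Finset.sum_congr rfl fun k _ => ?_
      rw [show ((k : ℂ) * (4 * Real.pi * r / s)) = (((k : ℝ) * β : ℝ) : ℂ) by push_cast [hβ]; ring]
      rw [Complex.exp_ofReal_mul_I_re]
    rw [h1, ← Complex.re_sum, hsum, Complex.zero_re]
  have hsin : ∑ k ∈ Finset.range s, Real.sin ((k : ℝ) * β) = 0 := by
    have h1 : ∑ k ∈ Finset.range s, Real.sin ((k : ℝ) * β)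
        = ∑ k ∈ Finset.range s, (Complex.exp ((k : ℂ) * (4 * Real.pi * r / s) * Complex.I)).im := by
      refine Finset.sum_congr rfl fun k _ => ?_
      rw [show ((k : ℂ) * (4 * Real.pi * r / s)) = (((k : ℝ) * β : ℝ) : ℂ) by push_cast [hβ]; ring]
      rw [Complex.exp_ofReal_mul_I_im]
    rw [h1, ← Complex.im_sum, hsum, Complex.zero_im]
  -- explicit values of phi
  have hphiz : phi z₀ = (1 + (z₀.re^2 + z₀.im^2)) / (2 * z₀.im) := by
    rw [phi, Complex.sq_norm, Complex.normSq_apply]; ring_nf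
  have hphiBi : phi (moeb B₀ Complex.I)
      = (B₀ 0 0^2 + B₀ 0 1^2 + B₀ 1 0^2 + B₀ 1 1^2) / 2 := by
    rw [phi_moeb B₀ hB₀ Complex.I (by simp)]
    simp only [Complex.normSq_apply, Complex.add_re, Complex.add_im, Complex.mul_re,
      Complex.mul_im, Complex.ofReal_re, Complex.ofReal_im, Complex.I_re, Complex.I_im]
    ring_nf
  set T : ℝ := phi z₀ * phi (moeb B₀ Complex.I) with hT
  set U : ℝ := ((B₀ 0 0^2 + B₀ 1 0^2 - B₀ 0 1^2 - B₀ 1 1^2) * (z₀.re^2 + z₀.im^2 - 1)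
      + 4 * (B₀ 0 0 * B₀ 0 1 + B₀ 1 0 * B₀ 1 1) * z₀.re) / (4 * z₀.im) with hU
  set V : ℝ := (2 * (B₀ 0 0 * B₀ 0 1 + B₀ 1 0 * B₀ 1 1) * (z₀.re^2 + z₀.im^2 - 1)
      - 2 * (B₀ 0 0^2 + B₀ 1 0^2 - B₀ 0 1^2 - B₀ 1 1^2) * z₀.re) / (4 * z₀.im) with hV
  have hstep : ∀ k ∈ Finset.range s,
      phi (moeb B₀ (moeb (Rot ((r : ℝ) * (k : ℝ) / (s : ℝ))) z₀))
      = T + U * Real.cos ((k : ℝ) * β) + V * Real.sin ((k : ℝ) * β) := by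
    intro k _
    set t : ℝ := 2 * Real.pi * ((r : ℝ) * (k : ℝ) / (s : ℝ)) with ht
    have hkβ : (k : ℝ) * β = 2 * t := by rw [hβ, ht]; field_simp; ring
    have hdet2 : (Rot ((r : ℝ) * (k : ℝ) / (s : ℝ))).det = 1 := rot_det _
    have hdetM : (B₀ * Rot ((r : ℝ) * (k : ℝ) / (s : ℝ))).det = 1 := by
      rw [Matrix.det_mul, hB₀, hdet2, one_mul]
    rw [moeb_comp B₀ _ hB₀ hdet2 z₀ hz₀, phi_moeb _ hdetM z₀ hz₀]
    have hc : Real.cos ((k : ℝ) * β) = Real.cos t ^ 2 - Real.sin t ^ 2 := by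
      rw [hkβ, Real.cos_two_mul]
      linear_combination Real.sin_sq_add_cos_sq t
    have hsn : Real.sin ((k : ℝ) * β) = 2 * Real.sin t * Real.cos t := by
      rw [hkβ, Real.sin_two_mul]
    rw [hc, hsn, hT, hphiz, hphiBi, hU, hV]
    have e00 : ((B₀ * Rot ((r : ℝ) * (k : ℝ) / (s : ℝ))) 0 0)
        = B₀ 0 0 * Real.cos t + B₀ 0 1 * Real.sin t := by
      rw [Matrix.mul_apply, Fin.sum_univ_two]; simp [Rot, ← ht]
    have e01 : ((B₀ * Rot ((r : ℝ) * (k : ℝ) / (s : ℝ))) 0 1)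
        = B₀ 0 1 * Real.cos t - B₀ 0 0 * Real.sin t := by
      rw [Matrix.mul_apply, Fin.sum_univ_two]; simp [Rot, ← ht]; ring
    have e10 : ((B₀ * Rot ((r : ℝ) * (k : ℝ) / (s : ℝ))) 1 0)
        = B₀ 1 0 * Real.cos t + B₀ 1 1 * Real.sin t := by
      rw [Matrix.mul_apply, Fin.sum_univ_two]; simp [Rot, ← ht]
    have e11 : ((B₀ * Rot ((r : ℝ) * (k : ℝ) / (s : ℝ))) 1 1)
        = B₀ 1 1 * Real.cos t - B₀ 1 0 * Real.sin t := by
      rw [Matrix.mul_apply, Fin.sum_univ_two]; simp [Rot, ← ht]; ring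
    rw [e00, e01, e10, e11]
    simp only [Complex.normSq_apply, Complex.add_re, Complex.add_im, Complex.mul_re,
      Complex.mul_im, Complex.ofReal_re, Complex.ofReal_im]
    linear_combination keyid2 (B₀ 0 0) (B₀ 0 1) (B₀ 1 0) (B₀ 1 1) z₀.re z₀.im
      (Real.cos t) (Real.sin t) (Real.sin_sq_add_cos_sq t) hy
  rw [Finset.sum_congr rfl hstep]
  have h1 : ∑ k ∈ Finset.range s, (T + U * Real.cos ((k : ℝ) * β) + V * Real.sin ((k : ℝ) * β))
      = (s : ℝ) * T + U * (∑ k ∈ Finset.range s, Real.cos ((k : ℝ) * β))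
        + V * (∑ k ∈ Finset.range s, Real.sin ((k : ℝ) * β)) := by
    rw [Finset.sum_add_distrib, Finset.sum_add_distrib, Finset.mul_sum, Finset.mul_sum,
      Finset.sum_const, Finset.card_range, nsmul_eq_mul]
  rw [h1, hcos, hsin]
  simp only [mul_zero, add_zero]
  field_simp
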